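/- Let a₁, a₂, w_{V,1}, w_{H,1} ∈ ℂ all have unit modulus, and define w_{V,2} = −conj(w_{H,1}) and w_{H,2} = conj(w_{V,1}). Then |w_{V,1} a₁ + w_{V,2} a₂|² + |w_{H,1} a₁ + w_{H,2} a₂|² = 4. -/

import Mathlib

/-- Girnyk–Petersson phase-only dual-polarized beamformer for two antennas:
with unit-modulus steering entries `a₁, a₂` and unit-modulus coefficients
`w_{V,1}, w_{H,1}`, setting `w_{V,2} = −conj(w_{H,1})` and
`w_{H,2} = conj(w_{V,1})` yields the isotropic total radiated power
`|w_{V,1}a₁ + w_{V,2}a₂|² + |w_{H,1}a₁ + w_{H,2}a₂|² = 4`. -/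
theorem two_antenna_dual_polarized_broad_beam
    (a₁ a₂ wV1 wH1 : ℂ)
    (ha₁ : ‖a₁‖ = 1) (ha₂ : ‖a₂‖ = 1)
    (hwV1 : ‖wV1‖ = 1) (hwH1 : ‖wH1‖ = 1)
    (wV2 wH2 : ℂ)
    (hwV2 : wV2 = -(starRingEnd ℂ) wH1) (hwH2 : wH2 = (starRingEnd ℂ) wV1) :
    ‖wV1 * a₁ + wV2 * a₂‖ ^ 2
      + ‖wH1 * a₁ + wH2 * a₂‖ ^ 2 = 4 := by
  subst hwV2 hwH2
  rw [← Complex.normSq_eq_norm_sq, ← Complex.normSq_eq_norm_sq]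
  have h : ∀ z : ℂ, ‖z‖ = 1 → Complex.normSq z = 1 := fun z hz => by
    rw [← Complex.sq_norm, hz]; norm_num
  simp only [Complex.normSq_add, Complex.normSq_mul, Complex.normSq_neg,
    Complex.normSq_conj, h _ ha₁, h _ ha₂, h _ hwV1, h _ hwH1,
    map_mul, map_neg, Complex.mul_re, Complex.neg_re, Complex.neg_im,
    Complex.conj_re, Complex.conj_im, Complex.mul_im]
  ring
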